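/- If G is a perfect graph, then codeg(P_G) = ω(G) + 1 = χ(G) + 1. -/

import Mathlib

open Finset Pointwise

noncomputable section

/-- The dilation `kP` of a set `P ⊆ ℝ^ι`. -/
def dilate {ι : Type*} (k : ℕ) (P : Set (ι → ℝ)) : Set (ι → ℝ) :=
  (fun x => (k : ℝ) • x) '' P

/-- A point of `ℝ^ι` is a lattice point if all its coordinates are integers. -/
def IsLatticePt {ι : Type*} (x : ι → ℝ) : Prop := ∀ i, ∃ m : ℤ, x i = m

/-- The codegree of a (full-dimensional lattice) polytope `P ⊆ ℝ^ι`: the smallest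
positive integer `k` such that the interior of `kP` contains a lattice point. -/
def codeg {ι : Type*} (P : Set (ι → ℝ)) : ℕ :=
  sInf {k | 0 < k ∧ ∃ x, IsLatticePt x ∧ x ∈ interior (dilate k P)}

/-- The stable set polytope of a simple graph: the convex hull of the indicator
vectors of the stable (independent) sets of `G`. -/
def stablePolytope {V : Type*} (G : SimpleGraph V) : Set (V → ℝ) :=
  convexHull ℝ {x | ∃ S : Set V, (∀ u ∈ S, ∀ v ∈ S, ¬ G.Adj u v) ∧
    x = S.indicator (fun _ => (1 : ℝ))}

/-- A graph is perfect if every induced subgraph `H` satisfies `ω(H) = χ(H)`. -/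
def IsPerfect {V : Type*} (G : SimpleGraph V) : Prop :=
  ∀ s : Set V, ((G.induce s).cliqueNum : ℕ∞) = (G.induce s).chromaticNumber

/-! ### Auxiliary lemmas -/

/-- The clique number is monotone along graph embeddings. -/
lemma my_cliqueNum_le_of_embedding {V W : Type*} [Fintype V] [Fintype W]
    {G : SimpleGraph V} {H : SimpleGraph W} (f : G ↪g H) :
    G.cliqueNum ≤ H.cliqueNum := by
  obtain ⟨s, hs⟩ := G.exists_isNClique_cliqueNum
  have hclique : H.IsClique (s.map f.toEmbedding) := by
    rintro a ha b hb hab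
    simp only [Finset.coe_map, Set.mem_image, Finset.mem_coe] at ha hb
    obtain ⟨u, hu, rfl⟩ := ha
    obtain ⟨v, hv, rfl⟩ := hb
    exact f.map_adj_iff.2 (hs.1 hu hv (fun h => hab (by rw [h])))
  calc G.cliqueNum = (s.map f.toEmbedding).card := by rw [Finset.card_map, hs.2]
    _ ≤ H.cliqueNum := SimpleGraph.IsClique.card_le_cliqueNum (tc := hclique)

/-- For a perfect graph, the chromatic number equals the clique number. -/
lemma my_chrom_eq {n : ℕ} (G : SimpleGraph (Fin n)) (hG : IsPerfect G) :
    G.chromaticNumber = (G.cliqueNum : ℕ∞) := by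
  have e := SimpleGraph.induceUnivIso G
  have h1 : (G.induce Set.univ).chromaticNumber = G.chromaticNumber :=
    le_antisymm (SimpleGraph.chromaticNumber_mono_of_hom e.toEmbedding.toHom)
      (SimpleGraph.chromaticNumber_mono_of_hom e.symm.toEmbedding.toHom)
  have h2 : (G.induce Set.univ).cliqueNum = G.cliqueNum :=
    le_antisymm (my_cliqueNum_le_of_embedding e.toEmbedding)
      (my_cliqueNum_le_of_embedding e.symm.toEmbedding)
  rw [← h1, ← h2, hG Set.univ]

/-- A small ball around the point with all coordinates `1/(ω+1)` is contained in the
stable set polytope, given a proper coloring with `ω` colors. -/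
lemma my_ball_subset {n : ℕ} (G : SimpleGraph (Fin n)) {ω : ℕ}
    (C : G.Coloring (Fin ω)) :
    Metric.ball (fun _ => ((ω : ℝ) + 1)⁻¹) (1 / (2*(n+1)*(ω+1)))
      ⊆ stablePolytope G := by
  set ε : ℝ := 1 / (2*(n+1)*(ω+1)) with hεdef
  have hε : 0 < ε := by positivity
  have hω : (0:ℝ) < (ω:ℝ) + 1 := by positivity
  set c : ℝ := ((ω : ℝ) + 1)⁻¹ with hcdef
  set l : ℝ := c - ε with hldef
  intro z hz
  have hz' : ∀ i, |z i - c| < ε := by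
    intro i
    have h := (dist_pi_lt_iff hε).1 (Metric.mem_ball.1 hz) i
    simpa [Real.dist_eq] using h
  have hl0 : 0 ≤ l := by
    have : ε ≤ c := by
      rw [hεdef, hcdef, div_le_iff₀ (by positivity), inv_mul_eq_div, le_div_iff₀ hω]
      nlinarith [Nat.cast_nonneg (α := ℝ) n, Nat.cast_nonneg (α := ℝ) ω]
    linarith
  have hzl : ∀ i, l ≤ z i := fun i => by
    have := (abs_lt.1 (hz' i)).1; linarith [this]
  set w : (Fin ω ⊕ (Fin n ⊕ Unit)) → ℝ :=
    Sum.elim (fun _ => l) (Sum.elim (fun i => z i - l)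
      (fun _ => 1 - ω * l - ∑ i : Fin n, (z i - l))) with hwdef
  set p : (Fin ω ⊕ (Fin n ⊕ Unit)) → (Fin n → ℝ) :=
    Sum.elim (fun j => Set.indicator {v | C v = j} (fun _ => 1))
      (Sum.elim (fun i => Set.indicator {i} (fun _ => 1)) (fun _ => fun _ => 0)) with hpdef
  have hw0 : ∀ i ∈ Finset.univ, 0 ≤ w i := by
    rintro (j | i | u) -
    · exact hl0
    · simpa [hwdef] using hzl i
    · simp only [hwdef, Sum.elim_inr]
      have hub : ∀ i : Fin n, z i - l ≤ 2 * ε := fun i => by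
        have := (abs_lt.1 (hz' i)).2; simp only [hldef]; linarith
      have hsum : ∑ i : Fin n, (z i - l) ≤ n * (2 * ε) := by
        calc ∑ i : Fin n, (z i - l) ≤ ∑ _i : Fin n, 2 * ε := Finset.sum_le_sum (fun i _ => hub i)
          _ = n * (2 * ε) := by simp [Finset.sum_const, mul_comm]
      have hlc : l ≤ c := by simp only [hldef]; linarith
      have hωl : (ω : ℝ) * l ≤ ω * c := by
        apply mul_le_mul_of_nonneg_left hlc (Nat.cast_nonneg ω)
      have hcω : (ω : ℝ) * c = 1 - c := by
        rw [hcdef]; field_simp; ring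
      have h2nε : (n : ℝ) * (2 * ε) ≤ c := by
        rw [hεdef, hcdef, inv_eq_one_div]
        have h1 : (n:ℝ) * (2 * (1/(2*((n:ℝ)+1)*((ω:ℝ)+1)))) = (2*n)/(2*((n:ℝ)+1)*((ω:ℝ)+1)) := by
          ring
        rw [h1, div_le_div_iff₀ (by positivity) hω]
        nlinarith [Nat.cast_nonneg (α := ℝ) n, Nat.cast_nonneg (α := ℝ) ω]
      linarith
  have hw1 : ∑ i : (Fin ω ⊕ (Fin n ⊕ Unit)), w i = 1 := by
    rw [hwdef]
    rw [Fintype.sum_sum_type, Fintype.sum_sum_type]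
    simp [Finset.sum_const, mul_comm]
  have hpmem : ∀ i ∈ Finset.univ, p i ∈ {x : Fin n → ℝ | ∃ S : Set (Fin n),
      (∀ u ∈ S, ∀ v ∈ S, ¬ G.Adj u v) ∧ x = S.indicator (fun _ => (1 : ℝ))} := by
    rintro (j | i | u) -
    · refine ⟨{v | C v = j}, ?_, rfl⟩
      intro u hu v hv hadj
      exact C.valid hadj (hu.trans hv.symm)
    · refine ⟨{i}, ?_, rfl⟩
      intro u hu v hv hadj
      rw [Set.mem_singleton_iff] at hu hv
      subst hu; subst hv
      exact G.irrefl hadj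
    · exact ⟨∅, by simp, by funext x; simp [hpdef]⟩
  have hrep : z = ∑ i : (Fin ω ⊕ (Fin n ⊕ Unit)), w i • p i := by
    funext v
    rw [Finset.sum_apply]
    rw [Fintype.sum_sum_type, Fintype.sum_sum_type]
    simp only [hwdef, hpdef, Sum.elim_inl, Sum.elim_inr, Pi.smul_apply, smul_eq_mul,
      Set.indicator_apply, Set.mem_setOf_eq, Set.mem_singleton_iff, mul_ite, mul_one, mul_zero]
    rw [Finset.sum_ite_eq Finset.univ (C v) (fun _ => l)]
    rw [Finset.sum_ite_eq Finset.univ v (fun i => z i - l)]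
    simp
  rw [hrep]
  exact Convex.sum_mem (convex_convexHull ℝ _) hw0 hw1
    (fun i hi => subset_convexHull ℝ _ (hpmem i hi))

/-- Lower bound: a lattice point in the interior of `kP` forces `k ≥ ω + 1`. -/
lemma my_lower {n : ℕ} (G : SimpleGraph (Fin n)) {k : ℕ} (hk : 0 < k)
    (x : Fin n → ℝ) (hlat : IsLatticePt x)
    (hint : x ∈ interior (dilate k (stablePolytope G))) :
    G.cliqueNum + 1 ≤ k := by
  classical
  by_contra h
  push_neg at h
  have hkω : k ≤ G.cliqueNum := by omega
  have hω : 1 ≤ G.cliqueNum := le_trans hk hkω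
  obtain ⟨Q, hQ⟩ := G.exists_isNClique_cliqueNum
  have hQcard : Q.card = G.cliqueNum := hQ.2
  have hPC : stablePolytope G ⊆
      {y : Fin n → ℝ | (∀ i, 0 ≤ y i) ∧ ∑ i ∈ Q, y i ≤ 1} := by
    apply convexHull_min
    · rintro y ⟨S, hS, rfl⟩
      constructor
      · intro i
        exact Set.indicator_nonneg (fun _ _ => zero_le_one) i
      · have hval : ∀ i, S.indicator (fun _ => (1:ℝ)) i = if i ∈ S then 1 else 0 := by
          intro i; simp [Set.indicator_apply]
        calc ∑ i ∈ Q, S.indicator (fun _ => (1:ℝ)) i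
            = ∑ i ∈ Q, (if i ∈ S then (1:ℝ) else 0) := by
              exact Finset.sum_congr rfl (fun i _ => hval i)
          _ = (Q.filter (fun i => i ∈ S)).card := by
              rw [Finset.sum_boole]
          _ ≤ 1 := by
              rw [Nat.cast_le_one, Finset.card_le_one]
              intro a ha b hb
              rw [Finset.mem_filter] at ha hb
              by_contra hne
              exact hS a ha.2 b hb.2 (hQ.1 ha.1 hb.1 hne)
    · intro y hy z hz a b ha hb hab
      refine ⟨fun i => ?_, ?_⟩
      · have := hy.1 i; have := hz.1 i
        simp only [Pi.add_apply, Pi.smul_apply, smul_eq_mul]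
        nlinarith
      · simp only [Pi.add_apply, Pi.smul_apply, smul_eq_mul]
        rw [Finset.sum_add_distrib, ← Finset.mul_sum, ← Finset.mul_sum]
        nlinarith [hy.2, hz.2]
  obtain ⟨δ, hδ, hball⟩ := Metric.mem_nhds_iff.1 (mem_interior_iff_mem_nhds.1 hint)
  have hkR : (0:ℝ) < k := by exact_mod_cast hk
  have hx1 : ∀ i, (1:ℝ) ≤ x i := by
    intro i
    have hmem : Function.update x i (x i - δ/2) ∈ Metric.ball x δ := by
      rw [Metric.mem_ball]
      rw [dist_pi_lt_iff hδ]
      intro j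
      rcases eq_or_ne j i with rfl | hne
      · rw [Function.update_self, Real.dist_eq]
        rw [abs_of_nonpos (by linarith)]
        linarith
      · rw [Function.update_of_ne hne, dist_self]; exact hδ
    obtain ⟨y, hyP, heq⟩ := hball hmem
    have hyi := (hPC hyP).1 i
    have : (k:ℝ) * y i = x i - δ/2 := by
      have := congrFun heq i
      simpa [Function.update_self] using this
    have hpos : 0 < x i := by nlinarith
    obtain ⟨m, hm⟩ := hlat i
    have hm1 : 1 ≤ m := by
      have : (0:ℝ) < (m:ℝ) := hm ▸ hpos
      exact_mod_cast this
    rw [hm]; exact_mod_cast hm1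
  have hmem2 : (fun j => x j + δ/2) ∈ Metric.ball x δ := by
    rw [Metric.mem_ball, dist_pi_lt_iff hδ]
    intro j
    rw [Real.dist_eq, abs_of_nonneg (by linarith)]
    linarith
  obtain ⟨y, hyP, heq⟩ := hball hmem2
  have hsumy := (hPC hyP).2
  have hsum : ∑ i ∈ Q, (x i + δ/2) = (k:ℝ) * ∑ i ∈ Q, y i := by
    rw [Finset.mul_sum]
    exact Finset.sum_congr rfl (fun i _ => (congrFun heq i).symm)
  have hsumlt : ∑ i ∈ Q, x i + Q.card * (δ/2) ≤ (k:ℝ) := by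
    have h1 : ∑ i ∈ Q, (x i + δ/2) = ∑ i ∈ Q, x i + Q.card * (δ/2) := by
      rw [Finset.sum_add_distrib, Finset.sum_const]
      simp [mul_comm]
    nlinarith [hsum, hsumy]
  have hsumge : (Q.card : ℝ) ≤ ∑ i ∈ Q, x i := by
    calc (Q.card : ℝ) = ∑ _i ∈ Q, (1:ℝ) := by simp
      _ ≤ ∑ i ∈ Q, x i := Finset.sum_le_sum (fun i _ => hx1 i)
  have hQpos : 0 < Q.card := by omega
  have hkQ : (k:ℝ) ≤ (Q.card : ℝ) := by
    rw [hQcard]; exact_mod_cast hkω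
  have : (0:ℝ) < Q.card * (δ/2) := by positivity
  linarith

/-- If `G` is perfect, then `codeg(P_G) = ω(G) + 1 = χ(G) + 1`. -/
theorem stmt4 {n : ℕ} (G : SimpleGraph (Fin n)) (hG : IsPerfect G) :
    codeg (stablePolytope G) = G.cliqueNum + 1 ∧
      (codeg (stablePolytope G) : ℕ∞) = G.chromaticNumber + 1 := by
  have hχω : G.chromaticNumber = (G.cliqueNum : ℕ∞) := my_chrom_eq G hG
  have hcol : G.Colorable G.cliqueNum :=
    SimpleGraph.chromaticNumber_le_iff_colorable.mp (le_of_eq hχω)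
  obtain ⟨C⟩ := hcol
  set ω := G.cliqueNum with hωdef
  -- upper bound: ω + 1 belongs to the set
  have hmem : (ω + 1) ∈ {k | 0 < k ∧ ∃ x, IsLatticePt x ∧
      x ∈ interior (dilate k (stablePolytope G))} := by
    refine ⟨Nat.succ_pos ω, fun _ => (1:ℝ), fun i => ⟨1, by norm_num⟩, ?_⟩
    set ε : ℝ := 1 / (2*(n+1)*(ω+1)) with hεdef
    have hε : 0 < ε := by positivity
    have hc : ((ω + 1 : ℕ) : ℝ) ≠ 0 := by positivity
    apply mem_interior.mpr
    refine ⟨((ω + 1 : ℕ) : ℝ) • (Metric.ball (fun _ => ((ω : ℝ) + 1)⁻¹) ε : Set (Fin n → ℝ)), ?_, ?_, ?_⟩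
    · have hsub : ((ω + 1 : ℕ) : ℝ) • Metric.ball (fun _ => ((ω : ℝ) + 1)⁻¹) ε ⊆
          ((ω + 1 : ℕ) : ℝ) • stablePolytope G :=
        Set.smul_set_mono (my_ball_subset G C)
      refine hsub.trans ?_
      intro u hu
      obtain ⟨v, hv, rfl⟩ := hu
      exact ⟨v, hv, rfl⟩
    · exact (Metric.isOpen_ball).smul₀ hc
    · refine ⟨fun _ => ((ω : ℝ) + 1)⁻¹, Metric.mem_ball_self hε, ?_⟩
      funext i
      simp only [Pi.smul_apply, smul_eq_mul]
      push_cast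
      field_simp
  constructor
  · apply le_antisymm
    · exact Nat.sInf_le hmem
    · exact le_csInf ⟨_, hmem⟩ (fun k hk => by
        obtain ⟨hk0, x, hlat, hint⟩ := hk
        exact my_lower G hk0 x hlat hint)
  · have h1 : codeg (stablePolytope G) = ω + 1 := by
      apply le_antisymm
      · exact Nat.sInf_le hmem
      · exact le_csInf ⟨_, hmem⟩ (fun k hk => by
          obtain ⟨hk0, x, hlat, hint⟩ := hk
          exact my_lower G hk0 x hlat hint)
    rw [h1, hχω]
    push_cast
    rfl
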